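/- In ℚ_3 there exists s with s² = 13 and |s − 1|_3 ≤ 1/3; for this s, the elements z_1 = (7 − s)/18 and z_2 = (7 + s)/18 satisfy: z_1 and z_2 are the two roots of the equation z(1 − 3 + 3z)² = (1 − 2 + 2z)² other than z = 1 (taking k = 2, α = 2, β = 3), |z_1|_3 = 1, |z_1 − 1|_3 = 1/3 (so z_1 ∈ E_3), and |z_2|_3 = 9 (so z_2 ∉ E_3). -/

import Mathlib

open Polynomial

lemma norm_int_one (k : ℤ) (hk : ¬ (3:ℤ) ∣ k) : ‖((k:ℤ) : ℚ_[3])‖ = 1 := by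
  have h1 := Padic.norm_int_le_one (p := 3) k
  have h2 := (Padic.norm_intCast_lt_one_iff (p := 3) (k := k)).not.mpr hk
  push_neg at h2
  linarith

lemma e2 : ‖(2 : ℤ_[3])‖ = 1 := by
  have : ((2:ℤ) : ℤ_[3]) = 2 := by norm_num
  rw [← this, PadicInt.norm_intCast_eq_padic_norm]
  exact norm_int_one 2 (by decide)

lemma exists_s : ∃ s : ℚ_[3], s ^ 2 = 13 ∧ ‖s - 1‖ < 1 := by
  obtain ⟨z, hz, hz1, -, -⟩ := hensels_lemma (p := 3) (R := ℤ_[3]) (F := X ^ 2 - C 13) (a := 1) (by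
    have h1 : (aeval (1:ℤ_[3]) (X ^ 2 - C 13 : ℤ_[3][X])) = -12 := by simp; norm_num
    have h2 : (aeval (1:ℤ_[3]) (X ^ 2 - C 13 : ℤ_[3][X]).derivative) = 2 := by simp; norm_num
    rw [h1, h2, e2]
    have e12 : ‖(-12 : ℤ_[3])‖ < 1 := by
      have : ((-12:ℤ) : ℤ_[3]) = -12 := by norm_num
      rw [← this]
      exact (PadicInt.norm_int_lt_one_iff_dvd (-12)).mpr (by decide)
    simpa using e12)
  have h2 : (aeval (1:ℤ_[3]) (X ^ 2 - C 13 : ℤ_[3][X]).derivative) = 2 := by simp; norm_num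
  rw [h2, e2] at hz1
  simp only [map_sub, map_pow, aeval_X, aeval_C, Algebra.algebraMap_self, RingHom.id_apply,
    sub_eq_zero] at hz
  refine ⟨(z : ℚ_[3]), by exact_mod_cast congrArg (fun x : ℤ_[3] => (x : ℚ_[3])) hz, ?_⟩
  have : ((z - 1 : ℤ_[3]) : ℚ_[3]) = (z : ℚ_[3]) - 1 := by push_cast; ring
  rw [← this]
  exact hz1

/-- Example 5.3 b) (`k = 2`, `p = 3`, `α = 2`, `β = 3`): there is `s ∈ ℚ_3` with `s² = 13`
and `|s − 1|_3 ≤ 1/3`; the elements `z₁ = (7 − s)/18` and `z₂ = (7 + s)/18` are exactly the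
roots of `z(1 − 3 + 3z)² = (1 − 2 + 2z)²` other than `z = 1`, with `|z₁|_3 = 1`,
`|z₁ − 1|_3 = 1/3` (so `z₁ ∈ E_3`) and `|z₂|_3 = 9` (so `z₂ ∉ E_3`). -/
theorem padic_example_k_two_alpha_two_beta_three :
    ∃ s : ℚ_[3], s ^ 2 = 13 ∧ ‖s - 1‖ ≤ 1 / 3 ∧
      (∀ z : ℚ_[3],
        z * (1 - 3 + 3 * z) ^ 2 = (1 - 2 + 2 * z) ^ 2 ↔
          (z = 1 ∨ z = (7 - s) / 18 ∨ z = (7 + s) / 18)) ∧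
      (7 - s) / 18 ≠ 1 ∧ (7 + s) / 18 ≠ 1 ∧
      ‖(7 - s) / 18‖ = 1 ∧ ‖(7 - s) / 18 - 1‖ = 1 / 3 ∧ ‖(7 + s) / 18‖ = 9 := by
  obtain ⟨s, hs, hlt⟩ := exists_s
  have h18 : (18 : ℚ_[3]) ≠ 0 := by norm_num
  -- norms of integer constants
  have n17 : ‖(17 : ℚ_[3])‖ = 1 := by
    have := norm_int_one 17 (by decide); norm_num at this ⊢; exact this
  have n23 : ‖(23 : ℚ_[3])‖ = 1 := by
    have := norm_int_one 23 (by decide); norm_num at this ⊢; exact this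
  have n2 : ‖(2 : ℚ_[3])‖ = 1 := by
    have := norm_int_one 2 (by decide); norm_num at this ⊢; exact this
  have n5 : ‖(5 : ℚ_[3])‖ = 1 := by
    have := norm_int_one 5 (by decide); norm_num at this ⊢; exact this
  have np : ∀ n : ℕ, ‖(3 : ℚ_[3]) ^ n‖ = (3 : ℝ) ^ (-(n:ℤ)) := fun n =>
    Padic.norm_p_pow n
  have n3 : ‖(3 : ℚ_[3])‖ = 1/3 := by
    have := np 1; norm_num at this ⊢; exact this
  have n9 : ‖(9 : ℚ_[3])‖ = 1/9 := by
    have := np 2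
    have h9 : (9 : ℚ_[3]) = 3 ^ 2 := by norm_num
    rw [h9, this]; norm_num
  have n27 : ‖(27 : ℚ_[3])‖ = 1/27 := by
    have := np 3
    have h27 : (27 : ℚ_[3]) = 3 ^ 3 := by norm_num
    rw [h27, this]; norm_num
  have n243 : ‖(243 : ℚ_[3])‖ = 1/243 := by
    have := np 5
    have h243 : (243 : ℚ_[3]) = 3 ^ 5 := by norm_num
    rw [h243, this]
    norm_num
  have n18 : ‖(18 : ℚ_[3])‖ = 1/9 := by
    have h : (18 : ℚ_[3]) = 2 * 9 := by norm_num
    rw [h, norm_mul, n2, n9, one_mul]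
  -- the key norm: ‖s - 16‖ = 1/243
  have hs16' : ‖s + 16‖ = 1 := by
    have h : s + 16 = (s - 1) + 17 := by ring
    rw [h, Padic.add_eq_max_of_ne (by rw [n17]; exact ne_of_lt hlt), n17]
    exact max_eq_right (le_of_lt hlt)
  have key : ‖s - 16‖ = 1/243 := by
    have h : (s - 16) * (s + 16) = -243 := by linear_combination hs
    have := congrArg norm h
    rw [norm_mul, hs16', mul_one, norm_neg, n243] at this
    exact this
  have k243 : (1/243 : ℝ) < 1/27 := by norm_num
  have h7s : ‖7 - s‖ = 1/9 := by
    have h : 7 - s = -(s - 16) + -9 := by ring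
    rw [h, Padic.add_eq_max_of_ne (by rw [norm_neg, norm_neg, key, n9]; norm_num),
      norm_neg, norm_neg, key, n9]
    norm_num
  have h7s' : ‖7 + s‖ = 1 := by
    have h : 7 + s = (s - 16) + 23 := by ring
    rw [h, Padic.add_eq_max_of_ne (by rw [key, n23]; norm_num), key, n23]
    norm_num
  have hz1m1 : ‖(7 - s) / 18 - 1‖ = 1/3 := by
    have h : (7 - s) / 18 - 1 = (-(s - 16) + -27) / 18 := by field_simp; ring
    rw [h, norm_div, Padic.add_eq_max_of_ne
      (by rw [norm_neg, norm_neg, key, n27]; norm_num), norm_neg, norm_neg, key, n27, n18]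
    norm_num
  have hz1 : ‖(7 - s) / 18‖ = 1 := by rw [norm_div, h7s, n18]; norm_num
  have hz2 : ‖(7 + s) / 18‖ = 9 := by rw [norm_div, h7s', n18]; norm_num
  refine ⟨s, hs, ?_, ?_, ?_, ?_, hz1, hz1m1, hz2⟩
  · have h : s - 1 = (s - 16) + 15 := by ring
    have n15 : ‖(15 : ℚ_[3])‖ = 1/3 := by
      have h' : (15 : ℚ_[3]) = 3 * 5 := by norm_num
      rw [h', norm_mul, n3, n5, mul_one]
    rw [h, Padic.add_eq_max_of_ne (by rw [key, n15]; norm_num), key, n15]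
    norm_num
  · intro z
    constructor
    · intro h
      have keyz : (z - 1) * ((18 * z - (7 - s)) * (18 * z - (7 + s))) = 0 := by
        linear_combination 36 * h - (z - 1) * hs
      rcases mul_eq_zero.mp keyz with h1 | h2
      · exact Or.inl (by linear_combination h1)
      · rcases mul_eq_zero.mp h2 with h3 | h4
        · refine Or.inr (Or.inl ?_)
          field_simp
          linear_combination h3
        · refine Or.inr (Or.inr ?_)
          field_simp
          linear_combination h4
    · rintro (rfl | rfl | rfl)
      · norm_num
      · field_simp
        linear_combination (-9 * (s + 11)) * hs
      · field_simp
        linear_combination (9 * (s - 11)) * hs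
  · intro h
    have := hz1m1
    rw [h] at this
    norm_num at this
  · intro h
    rw [h] at hz2
    norm_num at hz2
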